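/- The coefficients c_m = E[ReLU(G) h_m(G)] satisfy |c_m| = Θ(m^{-5/4}) along even m: there exist constants 0 < a ≤ b such that for all even m ≥ 2, a·m^{-5/4} ≤ |c_m| ≤ b·m^{-5/4}. -/

import Mathlib

open MeasureTheory ProbabilityTheory

/-- The `m`-th normalized probabilist's Hermite polynomial `h_m(t) = He_m(t)/√(m!)`. -/
noncomputable def hermiteN (m : ℕ) (t : ℝ) : ℝ :=
  (Polynomial.aeval t (Polynomial.hermite m)) / Real.sqrt (Nat.factorial m)

/-- `c_m = E_{G ~ N(0,1)}[ReLU(G) h_m(G)]`. -/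
noncomputable def reluCoeff (m : ℕ) : ℝ :=
  ∫ t, max 0 t * hermiteN m t ∂(gaussianReal 0 1)

open Polynomial Filter Real
open scoped Nat ENNReal NNReal

set_option maxHeartbeats 1000000

noncomputable def HR (n : ℕ) : Polynomial ℝ := (Polynomial.hermite n).map (Int.castRingHom ℝ)

lemma aeval_hermite_eq (n : ℕ) (t : ℝ) :
    (Polynomial.aeval t (Polynomial.hermite n) : ℝ) = (HR n).eval t := by
  rw [HR, Polynomial.aeval_def, Polynomial.eval₂_eq_eval_map]
  rfl

lemma HR_succ (n : ℕ) : HR (n+1) = X * HR n - Polynomial.derivative (HR n) := by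
  simp [HR, Polynomial.hermite_succ, Polynomial.derivative_map]

lemma eval_deriv_HR (n : ℕ) (t : ℝ) :
    (Polynomial.derivative (HR n)).eval t = t * (HR n).eval t - (HR (n+1)).eval t := by
  rw [HR_succ]; simp only [eval_sub, eval_mul, eval_X]; ring

lemma hasDerivAt_phi (t : ℝ) :
    HasDerivAt (fun t : ℝ => Real.exp (-(t^2/2))) (-t * Real.exp (-(t^2/2))) t := by
  have h : HasDerivAt (fun t : ℝ => -(t^2/2)) (-t) t := by
    simpa using ((hasDerivAt_pow 2 t).div_const 2).fun_neg
  simpa [mul_comm] using h.exp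

lemma hasDerivAt_F (k : ℕ) (t : ℝ) :
    HasDerivAt (fun t : ℝ => -(((HR k).eval t + t * (HR (k+1)).eval t) * Real.exp (-(t^2/2))))
      (t * (HR (k+2)).eval t * Real.exp (-(t^2/2))) t := by
  have h1 := Polynomial.hasDerivAt (HR k) t
  have h2 := Polynomial.hasDerivAt (HR (k+1)) t
  have h := (((h1.fun_add ((hasDerivAt_id t).fun_mul h2)).fun_mul (hasDerivAt_phi t))).fun_neg
  refine h.congr_deriv ?_
  rw [eval_deriv_HR, eval_deriv_HR]
  have : (HR (k+1+1)).eval t = (HR (k+2)).eval t := by norm_num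
  rw [this]
  simp only [id_eq]
  ring

lemma tendsto_monomial_gauss (i : ℕ) :
    Tendsto (fun t : ℝ => t^i * Real.exp (-(t^2/2))) atTop (nhds 0) := by
  have hsq : Tendsto (fun t : ℝ => t^2/2) atTop atTop :=
    (tendsto_pow_atTop (two_ne_zero)).atTop_div_const (by norm_num)
  have A := (tendsto_pow_mul_exp_neg_atTop_nhds_zero i).comp hsq
  have B : Tendsto (fun t : ℝ => (2:ℝ)^i * ((t^2/2)^i * Real.exp (-(t^2/2)))) atTop (nhds 0) := by
    simpa using A.const_mul ((2:ℝ)^i)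
  have B' : Tendsto (fun t : ℝ => t^(2*i) * Real.exp (-(t^2/2))) atTop (nhds 0) := by
    refine B.congr' ?_
    filter_upwards [eventually_ge_atTop (0:ℝ)] with t ht
    rw [pow_mul, div_pow]
    field_simp
  apply squeeze_zero_norm' _ B'
  filter_upwards [eventually_ge_atTop (1:ℝ)] with t ht
  have h1 : (0:ℝ) ≤ t := le_trans zero_le_one ht
  have h2 : t^i ≤ t^(2*i) := pow_le_pow_right₀ ht (by omega)
  rw [norm_mul, norm_pow, Real.norm_eq_abs, Real.norm_eq_abs, abs_of_nonneg h1,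
    abs_of_nonneg (Real.exp_pos _).le]
  exact mul_le_mul_of_nonneg_right h2 (Real.exp_pos _).le

lemma tendsto_poly_gauss (p : Polynomial ℝ) :
    Tendsto (fun t : ℝ => p.eval t * Real.exp (-(t^2/2))) atTop (nhds 0) := by
  have : ∀ t : ℝ, p.eval t * Real.exp (-(t^2/2)) =
      ∑ i ∈ Finset.range (p.natDegree + 1), p.coeff i * (t^i * Real.exp (-(t^2/2))) := by
    intro t
    rw [Polynomial.eval_eq_sum_range, Finset.sum_mul]
    simp [mul_assoc]
  simp_rw [this]
  have : (0:ℝ) = ∑ i ∈ Finset.range (p.natDegree + 1), p.coeff i * 0 := by simp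
  rw [this]
  exact tendsto_finset_sum _ fun i _ => (tendsto_monomial_gauss i).const_mul _

lemma integrable_monomial_gauss (i : ℕ) :
    Integrable (fun t : ℝ => t^i * Real.exp (-(t^2/2))) := by
  have hint : Integrable (fun t : ℝ => (1 + 4^i * (Nat.factorial i)) * Real.exp (-(1/4) * t^2)) :=
    (integrable_exp_neg_mul_sq (by norm_num : (0:ℝ) < 1/4)).const_mul _
  refine hint.mono' ?_ ?_
  · exact ((continuous_pow i).mul (Real.continuous_exp.comp (by continuity))).aestronglyMeasurable
  · filter_upwards with t
    rw [norm_mul, norm_pow, Real.norm_eq_abs, Real.norm_eq_abs, abs_of_nonneg (Real.exp_pos _).le]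
    have habs : |t|^i ≤ 1 + t^(2*i) := by
      rcases le_or_gt (|t|) 1 with h | h
      · have : |t|^i ≤ 1 := pow_le_one₀ (abs_nonneg t) h
        nlinarith [even_two_mul i, pow_nonneg (sq_nonneg t) i, sq_abs t, pow_mul t 2 i,
          pow_nonneg (abs_nonneg t) (2*i)]
      · have h2 : |t|^i ≤ |t|^(2*i) := pow_le_pow_right₀ h.le (by omega)
        have : |t|^(2*i) = t^(2*i) := by
          rw [pow_mul, sq_abs, ← pow_mul]
        nlinarith [pow_nonneg (abs_nonneg t) (2*i)]
    have hexp : t^(2*i) ≤ 4^i * (Nat.factorial i) * Real.exp (t^2/4) := by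
      have := Real.pow_div_factorial_le_exp (x := t^2/4) (by positivity) i
      have h4 : (t^2/4)^i = t^(2*i) / 4^i := by
        rw [div_pow, pow_mul]
      rw [h4] at this
      have hfac : (0:ℝ) < (Nat.factorial i : ℝ) := by positivity
      rw [div_le_iff₀ hfac] at this
      calc t^(2*i) = (t^(2*i) / 4^i) * 4^i := by field_simp
        _ ≤ (Real.exp (t^2/4) * Nat.factorial i) * 4^i := by
            apply mul_le_mul_of_nonneg_right this (by positivity)
        _ = 4^i * (Nat.factorial i) * Real.exp (t^2/4) := by ring
    have key : |t|^i * Real.exp (-(t^2/2)) ≤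
        (1 + 4^i * (Nat.factorial i) * Real.exp (t^2/4)) * Real.exp (-(t^2/2)) := by
      apply mul_le_mul_of_nonneg_right _ (Real.exp_pos _).le
      exact le_trans habs (by linarith)
    refine le_trans key ?_
    rw [add_mul, one_mul, mul_assoc, ← Real.exp_add]
    have : Real.exp (-(t^2/2)) ≤ Real.exp (-(1/4)*t^2) := by
      apply Real.exp_le_exp.mpr; nlinarith [sq_nonneg t]
    have h2 : Real.exp (t^2/4 + -(t^2/2)) = Real.exp (-(1/4)*t^2) := by
      congr 1; ring
    rw [h2]
    nlinarith [Real.exp_pos (-(1/4)*t^2), this,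
      (by positivity : (0:ℝ) ≤ (4:ℝ)^i * (Nat.factorial i))]

lemma integrable_poly_gauss (p : Polynomial ℝ) :
    Integrable (fun t : ℝ => p.eval t * Real.exp (-(t^2/2))) := by
  have : ∀ t : ℝ, p.eval t * Real.exp (-(t^2/2)) =
      ∑ i ∈ Finset.range (p.natDegree + 1), p.coeff i * (t^i * Real.exp (-(t^2/2))) := by
    intro t
    rw [Polynomial.eval_eq_sum_range, Finset.sum_mul]
    simp [mul_assoc]
  simp_rw [this]
  exact integrable_finset_sum _ fun i _ => (integrable_monomial_gauss i).const_mul _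

lemma pdf_eq (x : ℝ) : gaussianPDFReal 0 1 x = (Real.sqrt (2*Real.pi))⁻¹ * Real.exp (-(x^2/2)) := by
  simp [gaussianPDFReal]
  left
  ring

lemma reluCoeff_eq_integral (m : ℕ) :
    reluCoeff m = (Real.sqrt (2*Real.pi))⁻¹ * (Real.sqrt (Nat.factorial m))⁻¹ *
      ∫ t in Set.Ioi (0:ℝ), t * (HR m).eval t * Real.exp (-(t^2/2)) := by
  rw [reluCoeff, gaussianReal_of_var_ne_zero 0 one_ne_zero]
  rw [show gaussianPDF 0 1 = (fun x => ((gaussianPDFReal 0 1 x).toNNReal : ℝ≥0∞)) from rfl]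
  rw [integral_withDensity_eq_integral_smul ((measurable_gaussianPDFReal 0 1).real_toNNReal)]
  have h1 : ∀ x : ℝ, (gaussianPDFReal 0 1 x).toNNReal • (max 0 x * hermiteN m x)
      = ((Real.sqrt (2*Real.pi))⁻¹ * (Real.sqrt (Nat.factorial m))⁻¹) *
        (Set.indicator (Set.Ioi (0:ℝ)) (fun t => t * (HR m).eval t * Real.exp (-(t^2/2))) x) := by
    intro x
    rw [NNReal.smul_def, Real.coe_toNNReal _ (gaussianPDFReal_nonneg 0 1 x), smul_eq_mul,
      pdf_eq, hermiteN, aeval_hermite_eq]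
    rcases le_or_gt x 0 with hx | hx
    · rw [max_eq_left hx, Set.indicator_of_notMem (by simpa using hx)]
      ring
    · rw [max_eq_right hx.le, Set.indicator_of_mem (Set.mem_Ioi.mpr hx), div_eq_mul_inv]
      ring
  simp_rw [h1]
  rw [integral_const_mul, integral_indicator measurableSet_Ioi]

lemma integral_Ioi_eq (k : ℕ) :
    ∫ t in Set.Ioi (0:ℝ), t * (HR (k+2)).eval t * Real.exp (-(t^2/2)) = (HR k).eval 0 := by
  have hder : ∀ x ∈ Set.Ici (0:ℝ),
      HasDerivAt (fun t : ℝ => -(((HR k).eval t + t * (HR (k+1)).eval t) * Real.exp (-(t^2/2))))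
        (x * (HR (k+2)).eval x * Real.exp (-(x^2/2))) x := fun x _ => hasDerivAt_F k x
  have hint : IntegrableOn (fun t : ℝ => t * (HR (k+2)).eval t * Real.exp (-(t^2/2)))
      (Set.Ioi (0:ℝ)) := by
    have h := (integrable_poly_gauss (X * HR (k+2))).integrableOn (s := Set.Ioi (0:ℝ))
    refine h.congr_fun ?_ measurableSet_Ioi
    intro x _
    simp
  have htend : Tendsto (fun t : ℝ => -(((HR k).eval t + t * (HR (k+1)).eval t)
      * Real.exp (-(t^2/2)))) atTop (nhds 0) := by
    have h := (tendsto_poly_gauss (HR k + X * HR (k+1))).neg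
    rw [neg_zero] at h
    refine h.congr ?_
    intro t
    simp
  have := integral_Ioi_of_hasDerivAt_of_tendsto' hder hint htend
  rw [this]
  simp

lemma reluCoeff_even (n : ℕ) :
    reluCoeff (2*n+2) = (Real.sqrt (2*Real.pi))⁻¹ * (Real.sqrt (Nat.factorial (2*n+2)))⁻¹ *
      ((-1:ℝ)^n * ((2*n-1)‼ : ℕ)) := by
  rw [reluCoeff_eq_integral, show 2*n+2 = (2*n)+2 from rfl, integral_Ioi_eq]
  congr 1
  have h0 : (HR (2*n)).eval 0 = (((Polynomial.hermite (2*n)).coeff 0 : ℤ) : ℝ) := by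
    rw [HR, ← Polynomial.coeff_zero_eq_eval_zero, Polynomial.coeff_map]
    rfl
  rw [h0, show 2*n = 2*n+0 from rfl, Polynomial.coeff_hermite_explicit n 0]
  push_cast
  simp

lemma binom_sq_le (n : ℕ) : ((Nat.centralBinom n : ℝ))^2 * (2*n+1) ≤ 16^n := by
  induction n with
  | zero => simp [Nat.centralBinom]
  | succ n ih =>
    have key : ((n:ℝ)+1) * Nat.centralBinom (n+1) = 2*(2*n+1) * Nat.centralBinom n := by
      exact_mod_cast congrArg (Nat.cast : ℕ → ℝ) (Nat.succ_mul_centralBinom_succ n)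
    have key2 : (((n:ℝ)+1) * Nat.centralBinom (n+1))^2 = (2*(2*n+1) * Nat.centralBinom n)^2 := by
      rw [key]
    have hpos : (0:ℝ) < ((n:ℝ)+1)^2 := by positivity
    have h3 := mul_le_mul_of_nonneg_left ih (by positivity : (0:ℝ) ≤ 4*(2*n+1)*(2*n+3))
    have h4 : (4:ℝ)*(2*n+1)*(2*n+3) ≤ 16*((n:ℝ)+1)^2 := by nlinarith
    have h5 := mul_le_mul_of_nonneg_right h4 (by positivity : (0:ℝ) ≤ (16:ℝ)^n)
    have key3 : ((n:ℝ)+1)^2 * (((Nat.centralBinom (n+1) : ℝ))^2 * (2*((n:ℝ)+1)+1))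
        = 4*(2*(n:ℝ)+1)*(2*(n:ℝ)+3)*(((Nat.centralBinom n : ℝ))^2*(2*(n:ℝ)+1)) := by
      linear_combination (2*(n:ℝ)+3)*key2
    have h2 : ((n:ℝ)+1)^2 * (((Nat.centralBinom (n+1) : ℝ))^2 * (2*((n:ℝ)+1)+1))
        ≤ ((n:ℝ)+1)^2 * 16^(n+1) := by
      rw [key3]
      calc 4*(2*(n:ℝ)+1)*(2*(n:ℝ)+3)*(((Nat.centralBinom n : ℝ))^2*(2*(n:ℝ)+1))
          ≤ 4*(2*(n:ℝ)+1)*(2*(n:ℝ)+3)*16^n := h3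
        _ ≤ 16*((n:ℝ)+1)^2*16^n := h5
        _ = ((n:ℝ)+1)^2 * 16^(n+1) := by ring
    have := (mul_le_mul_iff_right₀ hpos).mp h2
    push_cast at this ⊢
    linarith

lemma le_binom_sq (n : ℕ) : (16:ℝ)^n ≤ ((Nat.centralBinom n : ℝ))^2 * (4*n+1) := by
  induction n with
  | zero => simp [Nat.centralBinom]
  | succ n ih =>
    have key : ((n:ℝ)+1) * Nat.centralBinom (n+1) = 2*(2*n+1) * Nat.centralBinom n := by
      exact_mod_cast congrArg (Nat.cast : ℕ → ℝ) (Nat.succ_mul_centralBinom_succ n)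
    have key2 : (((n:ℝ)+1) * Nat.centralBinom (n+1))^2 = (2*(2*n+1) * Nat.centralBinom n)^2 := by
      rw [key]
    have hpos : (0:ℝ) < ((n:ℝ)+1)^2 := by positivity
    have h4 : (16:ℝ)*((n:ℝ)+1)^2*(4*(n:ℝ)+1) ≤ 4*(2*(n:ℝ)+1)^2*(4*(n:ℝ)+5) := by nlinarith
    have hb : (0:ℝ) ≤ ((Nat.centralBinom n : ℝ))^2 := by positivity
    have key3 : ((n:ℝ)+1)^2 * (((Nat.centralBinom (n+1) : ℝ))^2 * (4*((n:ℝ)+1)+1))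
        = 4*(2*(n:ℝ)+1)^2*(((Nat.centralBinom n : ℝ))^2)*(4*(n:ℝ)+5) := by
      linear_combination (4*(n:ℝ)+5)*key2
    have hA := mul_le_mul_of_nonneg_left ih (by positivity : (0:ℝ) ≤ 16*((n:ℝ)+1)^2)
    have hB := mul_le_mul_of_nonneg_right h4 hb
    have h2 : ((n:ℝ)+1)^2 * 16^(n+1)
        ≤ ((n:ℝ)+1)^2 * (((Nat.centralBinom (n+1) : ℝ))^2 * (4*((n:ℝ)+1)+1)) := by
      rw [key3, show (16:ℝ)^(n+1) = 16*16^n by ring]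
      nlinarith [hA, hB]
    have := (mul_le_mul_iff_right₀ hpos).mp h2
    push_cast at this ⊢
    linarith

lemma doubleFac_eq (n : ℕ) : (2*n)! = 2^n * n ! * (2*n-1)‼ := by
  cases n with
  | zero => decide
  | succ n =>
    have h1 : (2*(n+1)) = (2*n+1)+1 := by ring
    rw [h1, Nat.factorial_eq_mul_doubleFactorial]
    have h2 : (2*n+1+1) = 2*(n+1) := by ring
    rw [h2, Nat.doubleFactorial_two_mul]
    have h3 : 2*(n+1)-1 = 2*n+1 := by omega
    rw [h3]

lemma key_id (n : ℕ) : (((2*n-1)‼ : ℕ):ℝ)^2 * 4^n * ((n ! : ℝ) * (n ! : ℝ))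
    = ((2*n)! : ℝ) * ((2*n)! : ℝ) := by
  have h := doubleFac_eq n
  have hc : ((2*n)! : ℝ) = ((2^n * n ! * (2*n-1)‼ : ℕ) : ℝ) := by rw [h]
  push_cast at hc
  have h4 : (4:ℝ)^n = 2^n * 2^n := by rw [← mul_pow]; norm_num
  rw [hc, h4]
  ring

lemma abs_reluCoeff_even (n : ℕ) :
    |reluCoeff (2*n+2)| = (((2*n-1)‼ : ℕ) : ℝ) /
      (Real.sqrt (2*Real.pi) * Real.sqrt ((2*n+2)!)) := by
  rw [reluCoeff_even, abs_mul, abs_mul, abs_mul, abs_pow, abs_neg, abs_one, one_pow, one_mul,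
    abs_of_nonneg (by positivity : (0:ℝ) ≤ (Real.sqrt (2*Real.pi))⁻¹),
    abs_of_nonneg (by positivity : (0:ℝ) ≤ (Real.sqrt (Nat.factorial (2*n+2)))⁻¹),
    abs_of_nonneg (by positivity : (0:ℝ) ≤ (((2*n-1)‼ : ℕ) : ℝ))]
  field_simp

lemma reluCoeff_sq (n : ℕ) :
    |reluCoeff (2*n+2)|^2
      = ((Nat.centralBinom n : ℝ)/4^n) / ((2*Real.pi) * (2*n+1) * (2*n+2)) := by
  have hCfact : ((Nat.centralBinom n : ℝ)) * ((n ! : ℝ) * (n ! : ℝ)) = ((2*n)! : ℝ) := by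
    have h : Nat.centralBinom n * n ! * n ! = (2*n)! := by
      rw [Nat.centralBinom]
      have := Nat.choose_mul_factorial_mul_factorial (show n ≤ 2*n by omega)
      simpa [show 2*n - n = n by omega] using this
    exact_mod_cast (by rw [← h]; ring : Nat.centralBinom n * (n ! * n !) = (2*n)!)
  have hfacne : ((n ! : ℝ) * (n ! : ℝ)) ≠ 0 := by positivity
  have hD2 : (((2*n-1)‼ : ℕ):ℝ)^2 * 4^n = (Nat.centralBinom n : ℝ) * ((2*n)! : ℝ) := by
    apply mul_right_cancel₀ hfacne
    calc (((2*n-1)‼ : ℕ):ℝ)^2 * 4^n * ((n ! : ℝ) * (n ! : ℝ))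
        = ((2*n)! : ℝ) * ((2*n)! : ℝ) := key_id n
      _ = ((2*n)! : ℝ) * ((Nat.centralBinom n : ℝ) * ((n ! : ℝ) * (n ! : ℝ))) := by rw [hCfact]
      _ = (Nat.centralBinom n : ℝ) * ((2*n)! : ℝ) * ((n ! : ℝ) * (n ! : ℝ)) := by ring
  have hfact : (((2*n+2)! : ℕ) : ℝ) = (2*(n:ℝ)+2) * (2*(n:ℝ)+1) * ((2*n)! : ℝ) := by
    have : (2*n+2)! = (2*n+2) * ((2*n+1) * (2*n)!) := by
      rw [show (2*n+2) = (2*n+1)+1 from rfl, Nat.factorial_succ, Nat.factorial_succ]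
    rw [this]
    push_cast
    ring
  rw [abs_reluCoeff_even, div_pow, mul_pow, Real.sq_sqrt (by positivity : (0:ℝ) ≤ 2*Real.pi),
    Real.sq_sqrt (by positivity : (0:ℝ) ≤ ((2*n+2)! : ℝ)), hfact]
  have h2 : (((2*n-1)‼ : ℕ):ℝ)^2 = ((Nat.centralBinom n : ℝ)/4^n) * ((2*n)! : ℝ) := by
    rw [div_mul_eq_mul_div, eq_div_iff (by positivity : ((4:ℝ)^n) ≠ 0)]
    exact hD2
  rw [h2]
  have hne1 : ((2*n)! : ℝ) ≠ 0 := by positivity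
  have hne2 : (0:ℝ) < 2*Real.pi := by positivity
  field_simp

lemma reluCoeff_bounds (n : ℕ) :
    Real.sqrt (1/(2*Real.sqrt 2*Real.pi)) * (((2*n+2:ℕ)):ℝ) ^ (-(5/4:ℝ)) ≤ |reluCoeff (2*n+2)| ∧
    |reluCoeff (2*n+2)| ≤ Real.sqrt (Real.sqrt 2/Real.pi) * (((2*n+2:ℕ)):ℝ) ^ (-(5/4:ℝ)) := by
  obtain ⟨W, hW⟩ : ∃ W:ℝ, W = (Nat.centralBinom n : ℝ)/4^n := ⟨_, rfl⟩
  obtain ⟨M, hMval⟩ : ∃ M:ℝ, M = 2*(n:ℝ)+2 := ⟨_, rfl⟩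
  obtain ⟨K, hK⟩ : ∃ K:ℝ, K = 2*(n:ℝ)+1 := ⟨_, rfl⟩
  have hMcast : ((2*n+2:ℕ):ℝ) = M := by rw [hMval]; push_cast; ring
  rw [hMcast]
  have hM0 : (0:ℝ) < M := by rw [hMval]; positivity
  have hK0 : (0:ℝ) < K := by rw [hK]; positivity
  have hKM : K ≤ M := by rw [hK, hMval]; linarith
  have hW0 : (0:ℝ) ≤ W := by rw [hW]; positivity
  obtain ⟨x, hxdef⟩ : ∃ x:ℝ, x = M ^ (-(5/4:ℝ)) := ⟨_, rfl⟩
  rw [← hxdef]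
  have hx0 : (0:ℝ) < x := hxdef ▸ Real.rpow_pos_of_pos hM0 _
  have hsqM : (0:ℝ) < Real.sqrt M := Real.sqrt_pos.mpr hM0
  have hsqK : (0:ℝ) < Real.sqrt K := Real.sqrt_pos.mpr hK0
  have hx2 : x^2 = 1/(M^2 * Real.sqrt M) := by
    rw [hxdef, ← Real.rpow_natCast (M ^ (-(5/4:ℝ))) 2, ← Real.rpow_mul hM0.le]
    rw [show (-(5/4:ℝ)) * ((2:ℕ):ℝ) = -(5/2) by push_cast; ring]
    rw [Real.rpow_neg hM0.le, show (5/2:ℝ) = ((2:ℕ):ℝ) + 1/2 by push_cast; ring,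
      Real.rpow_add hM0, Real.rpow_natCast, ← Real.sqrt_eq_rpow]
    rw [one_div]
  have hcsq : |reluCoeff (2*n+2)|^2 = W / ((2*Real.pi) * K * M) := by
    rw [reluCoeff_sq n, hW, hK, hMval]
  have h16 : ((4:ℝ)^n)^2 = 16^n := by
    rw [← pow_mul, show n*2 = 2*n by ring, pow_mul]
    norm_num
  have hW2l : 1/(4*(n:ℝ)+1) ≤ W^2 := by
    rw [hW, div_pow, h16, div_le_div_iff₀ (by positivity) (by positivity), one_mul]
    exact le_binom_sq n
  have hW2u : W^2 ≤ 1/K := by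
    rw [hW, div_pow, h16, hK, div_le_div_iff₀ (by positivity) (by positivity), one_mul]
    exact binom_sq_le n
  have hWl : 1/(Real.sqrt 2 * Real.sqrt M) ≤ W := by
    have h1 : Real.sqrt (1/(2*M)) ≤ Real.sqrt (W^2) := by
      apply Real.sqrt_le_sqrt
      refine le_trans ?_ hW2l
      apply one_div_le_one_div_of_le (by positivity)
      rw [hMval]; linarith
    rw [Real.sqrt_sq hW0] at h1
    have he : Real.sqrt (1/(2*M)) = 1/(Real.sqrt 2*Real.sqrt M) := by
      rw [one_div, Real.sqrt_inv, Real.sqrt_mul (by norm_num : (0:ℝ) ≤ 2), one_div]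
    rwa [he] at h1
  have hWu : W ≤ 1/Real.sqrt K := by
    have h1 : Real.sqrt (W^2) ≤ Real.sqrt (1/K) := Real.sqrt_le_sqrt hW2u
    rw [Real.sqrt_sq hW0] at h1
    refine le_trans h1 (le_of_eq ?_)
    rw [one_div, Real.sqrt_inv, one_div]
  constructor
  · have hsq : (Real.sqrt (1/(2*Real.sqrt 2*Real.pi)) * x)^2 ≤ |reluCoeff (2*n+2)|^2 := by
      rw [mul_pow, Real.sq_sqrt (by positivity : (0:ℝ) ≤ 1/(2*Real.sqrt 2*Real.pi)), hx2, hcsq]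
      have step : (1/(Real.sqrt 2 * Real.sqrt M))/((2*Real.pi) * M^2) ≤ W/((2*Real.pi)*K*M) := by
        apply div_le_div₀ hW0 hWl (by positivity)
        nlinarith [mul_le_mul_of_nonneg_left hKM (show (0:ℝ) ≤ 2*Real.pi*M by positivity)]
      refine le_trans (le_of_eq ?_) step
      have hs2 : (0:ℝ) < Real.sqrt 2 := by positivity
      field_simp
    have h := Real.sqrt_le_sqrt hsq
    rwa [Real.sqrt_sq (by positivity), Real.sqrt_sq (abs_nonneg _)] at h
  · have hcube : M * Real.sqrt M ≤ 2*Real.sqrt 2*(K*Real.sqrt K) := by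
      have hM2K : M ≤ 2*K := by rw [hMval, hK]; linarith
      have h1 : Real.sqrt (M^3) ≤ Real.sqrt (8*K^3) := by
        apply Real.sqrt_le_sqrt
        calc M^3 ≤ (2*K)^3 := pow_le_pow_left₀ hM0.le hM2K 3
          _ = 8*K^3 := by ring
      have e1 : Real.sqrt (M^3) = M * Real.sqrt M := by
        rw [show M^3 = M^2*M by ring, Real.sqrt_mul (by positivity), Real.sqrt_sq hM0.le]
      have e2 : Real.sqrt (8*K^3) = 2*Real.sqrt 2*(K*Real.sqrt K) := by
        rw [show (8:ℝ)*K^3 = (2^2*K^2)*(2*K) by ring, Real.sqrt_mul (by positivity),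
          Real.sqrt_mul (by norm_num : (0:ℝ) ≤ (2:ℝ)^2), Real.sqrt_sq (by norm_num : (0:ℝ) ≤ (2:ℝ)),
          Real.sqrt_mul (by norm_num : (0:ℝ) ≤ (2:ℝ)), Real.sqrt_sq hK0.le]
        ring
      rw [e1, e2] at h1
      exact h1
    have h1K : (1:ℝ)/Real.sqrt K = Real.sqrt K / K := by
      rw [div_eq_div_iff hsqK.ne' hK0.ne', one_mul, Real.mul_self_sqrt hK0.le]
    have step2 : Real.sqrt K/(K*((2*Real.pi)*K*M)) ≤ Real.sqrt 2/(Real.pi*(M^2*Real.sqrt M)) := by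
      rw [div_le_div_iff₀ (by positivity) (by positivity)]
      have h6 := mul_le_mul_of_nonneg_left hcube
        (show (0:ℝ) ≤ Real.pi*M*Real.sqrt K by positivity)
      have h7 : Real.pi*M*Real.sqrt K*(2*Real.sqrt 2*(K*Real.sqrt K))
          = Real.sqrt 2*(K*((2*Real.pi)*K*M)) := by
        have hKK : Real.sqrt K * Real.sqrt K = K := Real.mul_self_sqrt hK0.le
        linear_combination (2*Real.sqrt 2*Real.pi*M*K)*hKK
      nlinarith [h6, h7]
    have hsq : |reluCoeff (2*n+2)|^2 ≤ (Real.sqrt (Real.sqrt 2/Real.pi) * x)^2 := by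
      rw [mul_pow, Real.sq_sqrt (by positivity : (0:ℝ) ≤ Real.sqrt 2/Real.pi), hx2, hcsq]
      calc W/((2*Real.pi)*K*M) ≤ (1/Real.sqrt K)/((2*Real.pi)*K*M) :=
            (div_le_div_iff_of_pos_right (by positivity)).mpr hWu
        _ = Real.sqrt K/(K*((2*Real.pi)*K*M)) := by rw [h1K, div_div]
        _ ≤ Real.sqrt 2/(Real.pi*(M^2*Real.sqrt M)) := step2
        _ = Real.sqrt 2/Real.pi * (1/(M^2*Real.sqrt M)) := by
            rw [div_mul_div_comm, mul_one]
    have h := Real.sqrt_le_sqrt hsq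
    rwa [Real.sqrt_sq (abs_nonneg _), Real.sqrt_sq (by positivity)] at h

/-- `|c_m| = Θ(m^{-5/4})` along even `m ≥ 2`. -/
theorem reluCoeff_theta :
    ∃ a b : ℝ, 0 < a ∧ a ≤ b ∧ ∀ m : ℕ, 2 ≤ m → Even m →
      a * (m : ℝ) ^ (-(5 / 4 : ℝ)) ≤ |reluCoeff m| ∧
      |reluCoeff m| ≤ b * (m : ℝ) ^ (-(5 / 4 : ℝ)) := by
  refine ⟨Real.sqrt (1/(2*Real.sqrt 2*Real.pi)), Real.sqrt (Real.sqrt 2/Real.pi), ?_, ?_, ?_⟩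
  · exact Real.sqrt_pos.mpr (by positivity)
  · apply Real.sqrt_le_sqrt
    rw [div_le_div_iff₀ (by positivity) Real.pi_pos]
    nlinarith [Real.mul_self_sqrt (show (0:ℝ) ≤ 2 by norm_num), Real.pi_pos,
      Real.sqrt_nonneg (2:ℝ)]
  · intro m hm2 hme
    obtain ⟨r, hr⟩ := hme
    have hmeq : m = 2*(r-1)+2 := by omega
    rw [hmeq]
    have h54 : (-(5/4 : ℝ)) = -(5/4 : ℝ) := rfl
    exact reluCoeff_bounds (r-1)
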